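/- Let G be a sheaf of groups on a site, X a sheaf, and F a sheaf with a right G-action and an equivariant morphism p : F → X (G acting trivially on X). If p is an epimorphism of sheaves and the map i : F × G → F ×_X F, (x, h) ↦ (x, xh), is an isomorphism, then F is a G-torsor over X; conversely every G-torsor over X satisfies these two conditions. -/

import Mathlib

open CategoryTheory Opposite

universe w v u

/-- A morphism `p : F ⟶ X` of presheaves of types on a site is *locally surjective*
(an epimorphism of sheaves): every section of `X` is locally in the image of `p`. -/
def LocallySurjective {C : Type u} [Category.{v} C] (J : GrothendieckTopology C)
    {F X : Cᵒᵖ ⥤ Type w} (p : F ⟶ X) : Prop :=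
  ∀ (U : C) (x : X.obj (op U)), ∃ S ∈ J U, ∀ (V : C) (g : V ⟶ U), S.arrows g →
    ∃ f : F.obj (op V), p.app (op V) f = X.map g.op x

/-- The sections over `U` of the fibre product `Y ×_X F` of presheaves of types. -/
def PbSec {C : Type u} [Category.{v} C] {Y F X : Cᵒᵖ ⥤ Type w}
    (q : Y ⟶ X) (p : F ⟶ X) (U : Cᵒᵖ) : Type w :=
  {z : Y.obj U × F.obj U // q.app U z.1 = p.app U z.2}

/-- The restriction maps of the fibre product `Y ×_X F` of presheaves of types. -/
def pbMap {C : Type u} [Category.{v} C] {Y F X : Cᵒᵖ ⥤ Type w}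
    (q : Y ⟶ X) (p : F ⟶ X) {U V : Cᵒᵖ} (f : U ⟶ V) (z : PbSec q p U) : PbSec q p V :=
  ⟨(Y.map f z.val.1, F.map f z.val.2), by
    have h1 := NatTrans.naturality_apply q f z.val.1
    have h2 := NatTrans.naturality_apply p f z.val.2
    have hz : q.app U z.val.1 = p.app U z.val.2 := z.property
    show q.app V (Y.map f z.val.1) = p.app V (F.map f z.val.2)
    rw [h1, h2, hz]⟩

/-- Separatedness extracted from the sheaf condition: two sections agreeing on a
covering sieve are equal. -/
lemma sep_aux {C : Type u} [Category.{v} C] {J : GrothendieckTopology C}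
    {F : Cᵒᵖ ⥤ Type w} (hF : Presieve.IsSheaf J F) {U : C} {S : Sieve U} (hS : S ∈ J U)
    {t₁ t₂ : F.obj (op U)}
    (h : ∀ ⦃V : C⦄ (f : V ⟶ U), S.arrows f → F.map f.op t₁ = F.map f.op t₂) :
    t₁ = t₂ := by
  have hsf := hF S hS
  let x : Presieve.FamilyOfElements F S.arrows := fun V f _ => F.map f.op t₁
  have hx : x.Compatible := by
    intro V₁ V₂ W g₁ g₂ f₁ f₂ h₁ h₂ hcomm
    simp only [x, ← FunctorToTypes.map_comp_apply, ← op_comp, hcomm]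
  have h1 : x.IsAmalgamation t₁ := fun V f hf => rfl
  have h2 : x.IsAmalgamation t₂ := fun V f hf => (h f hf).symm
  exact (hsf x hx).unique h1 h2

/-- **Torsor criterion** (Demazure–Gabriel III §4 Cor. 1.7; Proposition 0.1 of the
paper).  Let `J` be a Grothendieck topology on `C`, let `F`, `X` be sheaves of types,
`G` a sheaf of groups acting on `F` on the right (compatibly with restriction), and
`p : F ⟶ X` a `G`-invariant morphism.  Then `F` is a `G`-torsor over `X` — i.e. there
exist a sheaf `Y` and a locally surjective (epimorphic) `q : Y ⟶ X` such that the
fibre product `Y ×_X F` is `G`-equivariantly isomorphic over `Y` to the trivial torsor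
`Y × G` — if and only if `p` is locally surjective (an epimorphism of sheaves) and the
canonical map `i : F × G → F ×_X F`, `(x, h) ↦ (x, xh)`, is an isomorphism (i.e. `G`
acts simply transitively on the nonempty fibres of `p`). -/
theorem stmt17 {C : Type u} [Category.{v} C] (J : GrothendieckTopology C)
    (F X G : Cᵒᵖ ⥤ Type w)
    (hF : Presieve.IsSheaf J F) (hX : Presieve.IsSheaf J X) (hG : Presieve.IsSheaf J G)
    [∀ U : Cᵒᵖ, Group (G.obj U)]
    (hGhom : ∀ {U V : Cᵒᵖ} (f : U ⟶ V) (a b : G.obj U),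
      G.map f (a * b) = G.map f a * G.map f b)
    (act : ∀ U : Cᵒᵖ, F.obj U → G.obj U → F.obj U)
    (hact1 : ∀ (U : Cᵒᵖ) (a : F.obj U), act U a 1 = a)
    (hactmul : ∀ (U : Cᵒᵖ) (a : F.obj U) (g g' : G.obj U),
      act U (act U a g) g' = act U a (g * g'))
    (hactnat : ∀ {U V : Cᵒᵖ} (f : U ⟶ V) (a : F.obj U) (g : G.obj U),
      F.map f (act U a g) = act V (F.map f a) (G.map f g))
    (p : F ⟶ X)
    (hpinv : ∀ (U : Cᵒᵖ) (a : F.obj U) (g : G.obj U), p.app U (act U a g) = p.app U a) :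
    (∃ (Y : Cᵒᵖ ⥤ Type w) (_ : Presieve.IsSheaf J Y) (q : Y ⟶ X)
        (_ : LocallySurjective J q) (e : ∀ U : Cᵒᵖ, PbSec q p U ≃ Y.obj U × G.obj U),
      -- `e` is a map over `Y`
      (∀ (U : Cᵒᵖ) (z : PbSec q p U), (e U z).1 = z.val.1) ∧
      -- `e` is natural
      (∀ (U V : Cᵒᵖ) (f : U ⟶ V) (z : PbSec q p U),
        e V (pbMap q p f z) = (Y.map f (e U z).1, G.map f (e U z).2)) ∧
      -- `e` is `G`-equivariant
      (∀ (U : Cᵒᵖ) (z₁ z₂ : PbSec q p U) (g : G.obj U),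
        z₂.val.1 = z₁.val.1 → z₂.val.2 = act U z₁.val.2 g →
        e U z₂ = ((e U z₁).1, (e U z₁).2 * g))) ↔
    (LocallySurjective J p ∧
      ∀ (U : Cᵒᵖ) (a b : F.obj U), p.app U a = p.app U b →
        ∃! g : G.obj U, act U a g = b) := by
  constructor
  · rintro ⟨Y, hY, q, hq, e, he1, he2, he3⟩
    -- uniqueness of the translating group element
    have uniq : ∀ (U : Cᵒᵖ) (a : F.obj U) (g g' : G.obj U),
        act U a g = act U a g' → g = g' := by
      intro U a g g' hgg
      obtain ⟨S, hS, hloc⟩ := hq U.unop (p.app U a)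
      refine sep_aux hG hS ?_
      intro V f hf
      obtain ⟨y, hy⟩ := hloc V f hf
      have hz : q.app (op V) y = p.app (op V) (F.map f.op a) := by
        rw [hy, FunctorToTypes.naturality]
      have hz2 : q.app (op V) y = p.app (op V) (F.map f.op (act U a g)) := by
        rw [hz]
        rw [hactnat]
        exact (hpinv _ _ _).symm
      let z₁ : PbSec q p (op V) := ⟨(y, F.map f.op a), hz⟩
      let z₂ : PbSec q p (op V) := ⟨(y, F.map f.op (act U a g)), hz2⟩
      have E1 := he3 (op V) z₁ z₂ (G.map f.op g) rfl (hactnat f.op a g)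
      have E2 := he3 (op V) z₁ z₂ (G.map f.op g') rfl
        (by show F.map f.op (act U a g) = _; rw [hgg]; exact hactnat f.op a g')
      exact mul_left_cancel (congrArg Prod.snd (E1.symm.trans E2))
    -- existence of the translating group element
    have exi : ∀ (U : Cᵒᵖ) (a b : F.obj U), p.app U a = p.app U b →
        ∃ g : G.obj U, act U a g = b := by
      intro U a b hab
      obtain ⟨S, hS, hloc⟩ := hq U.unop (p.app U a)
      choose y hy using hloc
      have hza : ∀ ⦃V : C⦄ (f : V ⟶ U.unop) (hf : S.arrows f),
          q.app (op V) (y V f hf) = p.app (op V) (F.map f.op a) := by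
        intro V f hf; rw [hy, FunctorToTypes.naturality]
      have hzb : ∀ ⦃V : C⦄ (f : V ⟶ U.unop) (hf : S.arrows f),
          q.app (op V) (y V f hf) = p.app (op V) (F.map f.op b) := by
        intro V f hf; rw [hy, hab, FunctorToTypes.naturality]
      let za : ∀ ⦃V : C⦄ (f : V ⟶ U.unop) (hf : S.arrows f), PbSec q p (op V) :=
        fun V f hf => ⟨(y V f hf, F.map f.op a), hza f hf⟩
      let zb : ∀ ⦃V : C⦄ (f : V ⟶ U.unop) (hf : S.arrows f), PbSec q p (op V) :=
        fun V f hf => ⟨(y V f hf, F.map f.op b), hzb f hf⟩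
      let fam : Presieve.FamilyOfElements G S.arrows :=
        fun V f hf => ((e (op V) (za f hf)).2)⁻¹ * (e (op V) (zb f hf)).2
      have key : ∀ ⦃V : C⦄ (f : V ⟶ U.unop) (hf : S.arrows f),
          act (op V) (F.map f.op a) (fam f hf) = F.map f.op b := by
        intro V f hf
        have hzc : q.app (op V) (y V f hf) =
            p.app (op V) (act (op V) (F.map f.op a) (fam f hf)) := by
          rw [hpinv]; exact hza f hf
        let zc : PbSec q p (op V) :=
          ⟨(y V f hf, act (op V) (F.map f.op a) (fam f hf)), hzc⟩
        have E := he3 (op V) (za f hf) zc (fam f hf) rfl rfl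
        have hfst : (e (op V) (za f hf)).1 = (e (op V) (zb f hf)).1 := by
          rw [he1, he1]
        have E2 : e (op V) zc = e (op V) (zb f hf) := by
          rw [E, mul_inv_cancel_left, hfst]
        have := (e (op V)).injective E2
        exact congrArg (fun z : PbSec q p (op V) => z.val.2) this
      have compat : fam.Compatible := by
        intro V₁ V₂ W g₁ g₂ f₁ f₂ h₁ h₂ hcomm
        apply uniq (op W) (F.map (g₁ ≫ f₁).op a)
        have k₁ : act (op W) (F.map (g₁ ≫ f₁).op a) (G.map g₁.op (fam f₁ h₁)) =
            F.map (g₁ ≫ f₁).op b := by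
          have := congrArg (F.map g₁.op) (key f₁ h₁)
          rw [hactnat] at this
          simpa only [op_comp, FunctorToTypes.map_comp_apply] using this
        have k₂ : act (op W) (F.map (g₂ ≫ f₂).op a) (G.map g₂.op (fam f₂ h₂)) =
            F.map (g₂ ≫ f₂).op b := by
          have := congrArg (F.map g₂.op) (key f₂ h₂)
          rw [hactnat] at this
          simpa only [op_comp, FunctorToTypes.map_comp_apply] using this
        rw [k₁, hcomm, k₂]
      obtain ⟨g, hg, -⟩ := hG S hS fam compat
      refine ⟨g, sep_aux hF hS ?_⟩
      intro V f hf
      rw [hactnat, hg f hf, key]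
    refine ⟨?_, fun U a b hab => ?_⟩
    · intro U x
      obtain ⟨S, hS, hloc⟩ := hq U x
      refine ⟨S, hS, fun V f hf => ?_⟩
      obtain ⟨y, hy⟩ := hloc V f hf
      let z := (e (op V)).symm (y, (1 : G.obj (op V)))
      have hz1 : z.val.1 = y := by
        have := he1 (op V) z
        rw [Equiv.apply_symm_apply] at this
        exact this.symm
      exact ⟨z.val.2, by rw [← z.property, hz1, hy]⟩
    · obtain ⟨g, hg⟩ := exi U a b hab
      exact ⟨g, hg, fun g' hg' => uniq U a g' g (hg'.trans hg.symm)⟩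
  · rintro ⟨hp, hst⟩
    refine ⟨F, hF, p, hp, fun U =>
      { toFun := fun z => (z.val.1, (hst U z.val.1 z.val.2 z.property).choose)
        invFun := fun w => ⟨(w.1, act U w.1 w.2), (hpinv U w.1 w.2).symm⟩
        left_inv := fun z => Subtype.ext (Prod.ext rfl
          (hst U z.val.1 z.val.2 z.property).choose_spec.1)
        right_inv := fun w => Prod.ext rfl
          ((hst U w.1 (act U w.1 w.2) (hpinv U w.1 w.2).symm).choose_spec.2 w.2 rfl).symm },
      fun U z => rfl, ?_, ?_⟩
    · intro U V f z
      refine Prod.ext rfl ?_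
      refine ((hst V (pbMap p p f z).val.1 (pbMap p p f z).val.2
        (pbMap p p f z).property).choose_spec.2
        (G.map f (hst U z.val.1 z.val.2 z.property).choose) ?_).symm
      show act V (F.map f z.val.1) (G.map f (hst U z.val.1 z.val.2 z.property).choose) =
        F.map f z.val.2
      rw [← hactnat, (hst U z.val.1 z.val.2 z.property).choose_spec.1]
    · intro U z₁ z₂ g h1 h2
      refine Prod.ext h1 ?_
      show (hst U z₂.val.1 z₂.val.2 z₂.property).choose =
        (hst U z₁.val.1 z₁.val.2 z₁.property).choose * g
      refine ((hst U z₂.val.1 z₂.val.2 z₂.property).choose_spec.2 _ ?_).symm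
      show act U z₂.val.1 ((hst U z₁.val.1 z₁.val.2 z₁.property).choose * g) = z₂.val.2
      rw [h1, ← hactmul, (hst U z₁.val.1 z₁.val.2 z₁.property).choose_spec.1, ← h2]
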